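/- Let η and ℓ be non-negative integers, let G be a graph, and let S ⊆ V(G) with td(G[S]) ≤ η. If S is ℓ-nearly clique separated in G, then |Z ∩ S| ≤ η + ℓ for any minimum-size treedepth-η modulator Z of G. -/

import Mathlib

/-- A rooted forest on the vertex type `V`, given by a parent function.
Acyclicity guarantees that following parents never returns to a vertex. -/
structure RootedForest (V : Type*) where
  parent : V → Option V
  acyclic : ∀ v : V, ¬ Relation.TransGen (fun a b => parent a = some b) v v

namespace RootedForest

variable {V : Type*} (F : RootedForest V)

/-- `F.Anc x y` means that `y` is an ancestor of `x` in the rooted forest `F`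
(every vertex is an ancestor of itself). -/
def Anc (x y : V) : Prop :=
  Relation.ReflTransGen (fun a b => F.parent a = some b) x y

/-- `F.ProperAnc x y` means that `y` is a proper ancestor of `x`. -/
def ProperAnc (x y : V) : Prop :=
  Relation.TransGen (fun a b => F.parent a = some b) x y

/-- `x` and `y` are in ancestor–descendant relation in `F`. -/
def AncDesc (x y : V) : Prop := F.Anc x y ∨ F.Anc y x

/-- The depth of `v` in `F`: the number of vertices on the path from `v`
to the root of its tree (including both endpoints). -/
noncomputable def depth (v : V) : ℕ := Nat.card {u : V // F.Anc v u}

/-- The height of the forest: the maximum depth of a vertex. -/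
noncomputable def height : ℕ := sSup (Set.range F.depth)

/-- The reach of `v` in `F`. -/
noncomputable def reach (v : V) : ℕ := F.height - F.depth v

/-- The vertex set of the subtree of `F` rooted at `v` (all descendants of `v`,
including `v` itself). -/
def subtree (v : V) : Set V := {u : V | F.Anc u v}

/-- `x` and `y` lie in the same tree of the forest, i.e. they have a common ancestor. -/
def SameTree (x y : V) : Prop := ∃ w : V, F.Anc x w ∧ F.Anc y w

end RootedForest

/-- `F` is a treedepth decomposition of `G`: a rooted forest on the vertex set of `G`
such that the endpoints of every edge are in ancestor–descendant relation. -/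
def SimpleGraph.IsTreedepthDecomp {V : Type*} (G : SimpleGraph V) (F : RootedForest V) : Prop :=
  ∀ ⦃u v : V⦄, G.Adj u v → F.AncDesc u v

/-- The treedepth of `G`: the minimum height of a treedepth decomposition of `G`. -/
noncomputable def SimpleGraph.treedepth {V : Type*} (G : SimpleGraph V) : ℕ :=
  sInf {n : ℕ | ∃ F : RootedForest V, G.IsTreedepthDecomp F ∧ F.height = n}

/-- The open neighborhood of a vertex set `S`: all vertices outside `S`
with a neighbor in `S`. -/
def SimpleGraph.nbhdSet {V : Type*} (G : SimpleGraph V) (S : Set V) : Set V :=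
  {u : V | u ∉ S ∧ ∃ s ∈ S, G.Adj u s}

/-- `Z` is a treedepth-`η` modulator of `G`: removing `Z` leaves a graph of
treedepth at most `η`. -/
def SimpleGraph.IsTdMod {V : Type*} (G : SimpleGraph V) (η : ℕ) (Z : Set V) : Prop :=
  (G.induce Zᶜ).treedepth ≤ η

/-- `G` contains `m` pairwise internally vertex-disjoint paths between `u` and `v`. -/
def IntDisjointPaths {V : Type*} (G : SimpleGraph V) (u v : V) (m : ℕ) : Prop :=
  ∃ P : Fin m → G.Walk u v, (∀ i, (P i).IsPath) ∧
    ∀ i j, i ≠ j → ∀ w, w ∈ (P i).support → w ∈ (P j).support → w = u ∨ w = v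

/-- A treedepth decomposition is nice if every subtree induces a connected subgraph. -/
def IsNiceDecomp {V : Type*} (G : SimpleGraph V) (F : RootedForest V) : Prop :=
  ∀ v : V, (G.induce (F.subtree v)).Connected


section Aux

lemma exists_max_on {W : Type*} [Finite W] (s : Set W) (hs : s.Nonempty) (f : W → ℕ) :
    ∃ x ∈ s, ∀ y ∈ s, f y ≤ f x := by
  classical
  have hfin : s.Finite := Set.toFinite s
  obtain ⟨x, hx, hmax⟩ := hfin.toFinset.exists_max_image f (by simpa using hs)
  exact ⟨x, by simpa using hx, fun y hy => hmax y (by simpa using hy)⟩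

namespace RootedForest
variable {W : Type*} (F : RootedForest W)

lemma anc_refl (a : W) : F.Anc a a := Relation.ReflTransGen.refl

lemma anc_trans {a b c : W} (h1 : F.Anc a b) (h2 : F.Anc b c) : F.Anc a c :=
  Relation.ReflTransGen.trans h1 h2

lemma properAnc_of_anc_ne {a b : W} (h : F.Anc a b) (hne : a ≠ b) : F.ProperAnc a b := by
  rcases Relation.reflTransGen_iff_eq_or_transGen.mp h with h' | h'
  · exact absurd h'.symm hne
  · exact h'

lemma anc_of_properAnc {a b : W} (h : F.ProperAnc a b) : F.Anc a b := h.to_reflTransGen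

lemma not_properAnc_self (a : W) : ¬ F.ProperAnc a a := F.acyclic a

lemma ancSet_subset {a b : W} (h : F.Anc a b) :
    {u | F.Anc b u} ⊆ {u | F.Anc a u} := fun _ hu => F.anc_trans h hu

lemma depth_eq_ncard (a : W) : F.depth a = {u | F.Anc a u}.ncard :=
  (Nat.card_coe_set_eq _).symm ▸ rfl

lemma depth_le_of_anc [Finite W] {a b : W} (h : F.Anc a b) : F.depth b ≤ F.depth a := by
  rw [F.depth_eq_ncard, F.depth_eq_ncard]
  exact Set.ncard_le_ncard (F.ancSet_subset h) (Set.toFinite _)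

lemma anc_of_anc_of_depth_le [Finite W] {a b : W} (h : F.Anc a b)
    (hd : F.depth a ≤ F.depth b) : F.Anc b a := by
  have hsub := F.ancSet_subset h
  have heq : {u | F.Anc b u} = {u | F.Anc a u} := by
    apply Set.eq_of_subset_of_ncard_le hsub _ (Set.toFinite _)
    rw [← F.depth_eq_ncard, ← F.depth_eq_ncard]; exact hd
  have : a ∈ {u | F.Anc b u} := heq ▸ (show a ∈ {u | F.Anc a u} from F.anc_refl a)
  exact this

lemma anc_comparable {x y : W} :
    ∀ {a : W}, F.Anc a x → F.Anc a y → F.Anc x y ∨ F.Anc y x := by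
  intro a h1
  induction h1 using Relation.ReflTransGen.head_induction_on with
  | refl => intro h2; exact Or.inl h2
  | head hstep hcx ih =>
    intro h2
    rcases Relation.ReflTransGen.cases_head h2 with rfl | ⟨c', hstep', h2'⟩
    · exact Or.inr (Relation.ReflTransGen.head hstep hcx)
    · rw [hstep] at hstep'
      obtain rfl := Option.some_inj.mp hstep'
      exact ih h2'

lemma depth_le_height [Finite W] (v : W) : F.depth v ≤ F.height :=
  le_csSup ((Set.finite_range _).bddAbove) ⟨v, rfl⟩

end RootedForest
end Aux

section Aux2
open RootedForest

lemma exists_decomp {W : Type*} [Fintype W] (H : SimpleGraph W) :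
    ∃ F : RootedForest W, H.IsTreedepthDecomp F := by
  classical
  set n := Fintype.card W with hn
  set e : W ≃ Fin n := Fintype.equivFin W with he
  set p : W → Option W :=
    fun v => if h : (e v : ℕ) + 1 < n then some (e.symm ⟨(e v : ℕ) + 1, h⟩) else none with hp
  have hstep : ∀ a b : W, p a = some b → (e b : ℕ) = (e a : ℕ) + 1 := by
    intro a b hab
    by_cases h : (e a : ℕ) + 1 < n
    · simp only [hp, dif_pos h, Option.some.injEq] at hab
      subst hab; simp
    · rw [hp] at hab; simp only [dif_neg h] at hab; cases hab
  have hlt : ∀ a b : W, Relation.TransGen (fun a b => p a = some b) a b →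
      (e a : ℕ) < (e b : ℕ) := by
    intro a b h
    induction h with
    | single h1 => have := hstep _ _ h1; omega
    | tail h1 h2 ih => have := hstep _ _ h2; omega
  refine ⟨⟨p, fun v hv => absurd (hlt v v hv) (lt_irrefl _)⟩, ?_⟩
  have hreach : ∀ (k : ℕ) (a b : W), (e b : ℕ) = (e a : ℕ) + k →
      Relation.ReflTransGen (fun a b => p a = some b) a b := by
    intro k
    induction k with
    | zero =>
      intro a b h
      have : e b = e a := Fin.ext (by omega)
      have : b = a := e.injective this
      subst this; exact Relation.ReflTransGen.refl
    | succ k ih =>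
      intro a b h
      have h1 : (e a : ℕ) + 1 < n := lt_of_le_of_lt (by omega) (e b).isLt
      have hstep1 : p a = some (e.symm ⟨(e a : ℕ) + 1, h1⟩) := by
        simp only [hp, dif_pos h1]
      refine Relation.ReflTransGen.head hstep1 (ih _ _ ?_)
      simp only [Equiv.apply_symm_apply]
      omega
  intro u v _
  rcases le_total ((e u : ℕ)) ((e v : ℕ)) with h | h
  · exact Or.inl (hreach ((e v : ℕ) - (e u : ℕ)) u v (by omega))
  · exact Or.inr (hreach ((e u : ℕ) - (e v : ℕ)) v u (by omega))

lemma exists_decomp_height_eq {W : Type*} [Fintype W] (H : SimpleGraph W) :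
    ∃ F : RootedForest W, H.IsTreedepthDecomp F ∧ F.height = H.treedepth := by
  obtain ⟨F0, hF0⟩ := exists_decomp H
  have hne : {n : ℕ | ∃ F : RootedForest W, H.IsTreedepthDecomp F ∧ F.height = n}.Nonempty :=
    ⟨F0.height, F0, hF0, rfl⟩
  exact Nat.sInf_mem hne

lemma treedepth_le_of_decomp {W : Type*} (H : SimpleGraph W) (F : RootedForest W)
    (hF : H.IsTreedepthDecomp F) : H.treedepth ≤ F.height :=
  Nat.sInf_le ⟨F, hF, rfl⟩

end Aux2
section Aux3
open RootedForest

lemma treedepth_le_of_embed {W' W : Type*} [Finite W'] [Finite W]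
    (H' : SimpleGraph W') (H : SimpleGraph W) (f : W' → W) (hinj : Function.Injective f)
    (hadj : ∀ u v : W', H'.Adj u v → H.Adj (f u) (f v)) :
    H'.treedepth ≤ H.treedepth := by
  classical
  cases nonempty_fintype W
  obtain ⟨F, hF, hht⟩ := exists_decomp_height_eq H
  -- proper ancestors of `f a` that lie in the range of `f`, pulled back
  set pa : W' → Set W' := fun a => {b | F.ProperAnc (f a) (f b)} with hpa
  have hsel : ∀ a : W', (pa a).Nonempty →
      ∃ x ∈ pa a, ∀ y ∈ pa a, F.depth (f y) ≤ F.depth (f x) :=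
    fun a h => exists_max_on (pa a) h (fun b => F.depth (f b))
  set p : W' → Option W' := fun a =>
    if h : (pa a).Nonempty then some (hsel a h).choose else none with hp
  have hstep : ∀ a b : W', p a = some b →
      b ∈ pa a ∧ ∀ y ∈ pa a, F.depth (f y) ≤ F.depth (f b) := by
    intro a b hab
    by_cases h : (pa a).Nonempty
    · rw [hp] at hab; simp only [dif_pos h, Option.some.injEq] at hab
      subst hab
      obtain ⟨h1, h2⟩ := (hsel a h).choose_spec
      exact ⟨h1, h2⟩
    · rw [hp] at hab; simp only [dif_neg h] at hab; cases hab
  have hstepP : ∀ a b : W', p a = some b → F.ProperAnc (f a) (f b) :=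
    fun a b hab => (hstep a b hab).1
  have hliftT : ∀ a b : W', Relation.TransGen (fun a b => p a = some b) a b →
      F.ProperAnc (f a) (f b) := by
    intro a b h
    induction h with
    | single h1 => exact hstepP _ _ h1
    | tail h1 h2 ih => exact Relation.TransGen.trans ih (hstepP _ _ h2)
  set F' : RootedForest W' :=
    ⟨p, fun v hv => F.acyclic (f v) (hliftT v v hv)⟩ with hF'
  have hdown : ∀ a b : W', F'.Anc a b → F.Anc (f a) (f b) := by
    intro a b h
    induction h with
    | refl => exact F.anc_refl _
    | tail h1 h2 ih => exact F.anc_trans ih (F.anc_of_properAnc (hstepP _ _ h2))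
  -- key: lifting ancestor relations into F'
  have key : ∀ (m : ℕ) (a : W'), Nat.card (pa a) ≤ m →
      ∀ b : W', F.Anc (f a) (f b) → F'.Anc a b := by
    intro m
    induction m with
    | zero =>
      intro a hcard b hanc
      by_cases hab : a = b
      · subst hab; exact F'.anc_refl a
      · have hb : b ∈ pa a := F.properAnc_of_anc_ne hanc (fun h => hab (hinj h))
        haveI : Nonempty (pa a) := ⟨⟨b, hb⟩⟩
        have : 0 < Nat.card (pa a) := Nat.card_pos
        omega
    | succ m ih =>
      intro a hcard b hanc
      by_cases hab : a = b
      · subst hab; exact F'.anc_refl a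
      · have hb : b ∈ pa a := F.properAnc_of_anc_ne hanc (fun h => hab (hinj h))
        have hne : (pa a).Nonempty := ⟨b, hb⟩
        have hpc : p a = some (hsel a hne).choose := by rw [hp]; simp only [dif_pos hne]
        obtain ⟨hc, hmax⟩ := hstep a _ hpc
        set c := (hsel a hne).choose with hcdef
        -- F.Anc (f c) (f b)
        have hcb : F.Anc (f c) (f b) := by
          rcases F.anc_comparable (F.anc_of_properAnc hc) (F.anc_of_properAnc hb) with h | h
          · exact h
          · exact F.anc_of_anc_of_depth_le h (hmax b hb)
        -- cardinal decrease
        have hsub : pa c ⊆ pa a := fun u hu => Relation.TransGen.trans hc hu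
        have hcnot : c ∉ pa c := F.not_properAnc_self (f c)
        have hlt : Nat.card (pa c) < Nat.card (pa a) := by
          rw [Nat.card_coe_set_eq, Nat.card_coe_set_eq]
          exact Set.ncard_lt_ncard ((Set.ssubset_iff_of_subset hsub).mpr ⟨c, hc, hcnot⟩)
            (Set.toFinite _)
        exact Relation.ReflTransGen.head hpc (ih c (by omega) b hcb)
  have hdecomp : H'.IsTreedepthDecomp F' := by
    intro u v huv
    rcases hF (hadj u v huv) with h | h
    · exact Or.inl (key (Nat.card (pa u)) u le_rfl v h)
    · exact Or.inr (key (Nat.card (pa v)) v le_rfl u h)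
  have hdepth : ∀ a : W', F'.depth a ≤ F.depth (f a) := by
    intro a
    have : Function.Injective
        (fun u : {u : W' // F'.Anc a u} => (⟨f u.1, hdown a u.1 u.2⟩ : {u : W // F.Anc (f a) u})) := by
      intro u v huv
      exact Subtype.ext (hinj (congrArg Subtype.val huv))
    exact Nat.card_le_card_of_injective _ this
  have hheight : F'.height ≤ F.height := by
    rcases isEmpty_or_nonempty W' with hW | hW
    · have : Set.range F'.depth = ∅ := Set.range_eq_empty _
      rw [RootedForest.height, this, csSup_empty]
      exact Nat.zero_le _
    · refine csSup_le (Set.range_nonempty _) ?_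
      rintro n ⟨a, rfl⟩
      exact le_trans (hdepth a) (F.depth_le_height (f a))
  calc H'.treedepth ≤ F'.height := treedepth_le_of_decomp H' F' hdecomp
    _ ≤ F.height := hheight
    _ = H.treedepth := hht

lemma ncard_le_treedepth_of_isClique {W : Type*} [Finite W] (H : SimpleGraph W)
    (K : Set W) (hK : H.IsClique K) : K.ncard ≤ H.treedepth := by
  classical
  cases nonempty_fintype W
  obtain ⟨F, hF, hht⟩ := exists_decomp_height_eq H
  rcases K.eq_empty_or_nonempty with rfl | hne
  · simp
  obtain ⟨x, hx, hmax⟩ := exists_max_on K hne F.depth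
  have hanc : ∀ y ∈ K, F.Anc x y := by
    intro y hy
    by_cases hxy : x = y
    · subst hxy; exact F.anc_refl x
    · rcases hF (hK hx hy hxy) with h | h
      · exact h
      · exact F.anc_of_anc_of_depth_le h (hmax y hy)
  calc K.ncard ≤ {u : W | F.Anc x u}.ncard :=
        Set.ncard_le_ncard hanc (Set.toFinite _)
    _ = F.depth x := (F.depth_eq_ncard x).symm
    _ ≤ F.height := F.depth_le_height x
    _ = H.treedepth := hht

end Aux3
section Aux4
open RootedForest

lemma treedepth_le_max_of_separation {W : Type*} [Finite W] (H : SimpleGraph W) (P : Set W)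
    (hsep : ∀ u v : W, u ∈ P → v ∉ P → ¬ H.Adj u v) :
    H.treedepth ≤ max (H.induce P).treedepth (H.induce Pᶜ).treedepth := by
  classical
  cases nonempty_fintype W
  obtain ⟨F1, hF1, hh1⟩ := exists_decomp_height_eq (H.induce P)
  obtain ⟨F2, hF2, hh2⟩ := exists_decomp_height_eq (H.induce Pᶜ)
  set p : W → Option W := fun w =>
    if h : w ∈ P then (F1.parent ⟨w, h⟩).map Subtype.val
    else (F2.parent ⟨w, h⟩).map Subtype.val with hp
  have hstepP : ∀ a b : W, p a = some b → ∀ ha : a ∈ P,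
      ∃ hb : b ∈ P, F1.parent ⟨a, ha⟩ = some ⟨b, hb⟩ := by
    intro a b hab ha
    rw [hp] at hab; simp only [dif_pos ha, Option.map_eq_some_iff] at hab
    obtain ⟨b', hb', rfl⟩ := hab
    exact ⟨b'.2, by rw [hb']⟩
  have hstepC : ∀ a b : W, p a = some b → ∀ ha : a ∉ P,
      ∃ hb : b ∉ P, F2.parent ⟨a, ha⟩ = some ⟨b, hb⟩ := by
    intro a b hab ha
    rw [hp] at hab; simp only [dif_neg ha, Option.map_eq_some_iff] at hab
    obtain ⟨b', hb', rfl⟩ := hab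
    exact ⟨b'.2, by rw [hb']⟩
  have hliftP : ∀ a b : W, Relation.TransGen (fun a b => p a = some b) a b →
      ∀ ha : a ∈ P, ∃ hb : b ∈ P,
        Relation.TransGen (fun x y => F1.parent x = some y) (⟨a, ha⟩ : P) ⟨b, hb⟩ := by
    intro a b h
    induction h with
    | single h1 =>
      intro ha
      obtain ⟨hb, hs⟩ := hstepP _ _ h1 ha
      exact ⟨hb, Relation.TransGen.single hs⟩
    | tail h1 h2 ih =>
      intro ha
      obtain ⟨hb, ht⟩ := ih ha
      obtain ⟨hc, hs⟩ := hstepP _ _ h2 hb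
      exact ⟨hc, Relation.TransGen.tail ht hs⟩
  have hliftC : ∀ a b : W, Relation.TransGen (fun a b => p a = some b) a b →
      ∀ ha : a ∉ P, ∃ hb : b ∉ P,
        Relation.TransGen (fun x y => F2.parent x = some y) (⟨a, ha⟩ : ↥Pᶜ) ⟨b, hb⟩ := by
    intro a b h
    induction h with
    | single h1 =>
      intro ha
      obtain ⟨hb, hs⟩ := hstepC _ _ h1 ha
      exact ⟨hb, Relation.TransGen.single hs⟩
    | tail h1 h2 ih =>
      intro ha
      obtain ⟨hb, ht⟩ := ih ha
      obtain ⟨hc, hs⟩ := hstepC _ _ h2 hb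
      exact ⟨hc, Relation.TransGen.tail ht hs⟩
  have hacyc : ∀ v : W, ¬ Relation.TransGen (fun a b => p a = some b) v v := by
    intro v hv
    by_cases h : v ∈ P
    · obtain ⟨hb, ht⟩ := hliftP v v hv h
      exact F1.acyclic ⟨v, h⟩ ht
    · obtain ⟨hb, ht⟩ := hliftC v v hv h
      exact F2.acyclic ⟨v, h⟩ ht
  set F : RootedForest W := ⟨p, hacyc⟩ with hFdef
  -- lift Anc up
  have hancP : ∀ a b : W, F.Anc a b → ∀ ha : a ∈ P,
      ∃ hb : b ∈ P, F1.Anc ⟨a, ha⟩ ⟨b, hb⟩ := by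
    intro a b h
    induction h with
    | refl => intro ha; exact ⟨ha, F1.anc_refl _⟩
    | tail h1 h2 ih =>
      intro ha
      obtain ⟨hb, ht⟩ := ih ha
      obtain ⟨hc, hs⟩ := hstepP _ _ h2 hb
      exact ⟨hc, Relation.ReflTransGen.tail ht hs⟩
  have hancC : ∀ a b : W, F.Anc a b → ∀ ha : a ∉ P,
      ∃ hb : b ∉ P, F2.Anc ⟨a, ha⟩ ⟨b, hb⟩ := by
    intro a b h
    induction h with
    | refl => intro ha; exact ⟨ha, F2.anc_refl _⟩
    | tail h1 h2 ih =>
      intro ha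
      obtain ⟨hb, ht⟩ := ih ha
      obtain ⟨hc, hs⟩ := hstepC _ _ h2 hb
      exact ⟨hc, Relation.ReflTransGen.tail ht hs⟩
  -- push Anc down
  have hdownP : ∀ x y : ↥P, F1.Anc x y → F.Anc (x : W) (y : W) := by
    intro x y h
    refine Relation.ReflTransGen.lift Subtype.val ?_ _ _ h
    intro a b hab
    show p (a : W) = some (b : W)
    rw [hp]; simp only [dif_pos a.2]
    rw [show (⟨(a : W), a.2⟩ : P) = a from rfl, hab]; rfl
  have hdownC : ∀ x y : ↥Pᶜ, F2.Anc x y → F.Anc (x : W) (y : W) := by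
    intro x y h
    refine Relation.ReflTransGen.lift Subtype.val ?_ _ _ h
    intro a b hab
    show p (a : W) = some (b : W)
    rw [hp]; simp only [dif_neg a.2]
    rw [show (⟨(a : W), a.2⟩ : ↥Pᶜ) = a from rfl, hab]; rfl
  have hdecomp : H.IsTreedepthDecomp F := by
    intro u v huv
    by_cases hu : u ∈ P <;> by_cases hv : v ∈ P
    · rcases hF1 (show (H.induce P).Adj ⟨u, hu⟩ ⟨v, hv⟩ from huv) with h | h
      · exact Or.inl (hdownP _ _ h)
      · exact Or.inr (hdownP _ _ h)
    · exact absurd huv (hsep u v hu hv)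
    · exact absurd huv.symm (hsep v u hv hu)
    · rcases hF2 (show (H.induce Pᶜ).Adj ⟨u, hu⟩ ⟨v, hv⟩ from huv) with h | h
      · exact Or.inl (hdownC _ _ h)
      · exact Or.inr (hdownC _ _ h)
  have hdepth : ∀ w : W, F.depth w ≤ max (H.induce P).treedepth (H.induce Pᶜ).treedepth := by
    intro w
    by_cases hw : w ∈ P
    · have hmap : Function.Injective (fun u : {u : W // F.Anc w u} =>
          (⟨⟨u.1, (hancP w u.1 u.2 hw).choose⟩,
            (hancP w u.1 u.2 hw).choose_spec⟩ : {u : ↥P // F1.Anc ⟨w, hw⟩ u})) := by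
        intro u v huv
        apply Subtype.ext
        exact congrArg (fun t => (t.1 : W)) huv
      have h1 : F.depth w ≤ F1.depth ⟨w, hw⟩ := Nat.card_le_card_of_injective _ hmap
      calc F.depth w ≤ F1.depth ⟨w, hw⟩ := h1
        _ ≤ F1.height := F1.depth_le_height _
        _ = (H.induce P).treedepth := hh1
        _ ≤ _ := le_max_left _ _
    · have hmap : Function.Injective (fun u : {u : W // F.Anc w u} =>
          (⟨⟨u.1, (hancC w u.1 u.2 hw).choose⟩,
            (hancC w u.1 u.2 hw).choose_spec⟩ : {u : ↥Pᶜ // F2.Anc ⟨w, hw⟩ u})) := by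
        intro u v huv
        apply Subtype.ext
        exact congrArg (fun t => (t.1 : W)) huv
      have h1 : F.depth w ≤ F2.depth ⟨w, hw⟩ := Nat.card_le_card_of_injective _ hmap
      calc F.depth w ≤ F2.depth ⟨w, hw⟩ := h1
        _ ≤ F2.height := F2.depth_le_height _
        _ = (H.induce Pᶜ).treedepth := hh2
        _ ≤ _ := le_max_right _ _
  have hheight : F.height ≤ max (H.induce P).treedepth (H.induce Pᶜ).treedepth := by
    rcases isEmpty_or_nonempty W with hW | hW
    · have : Set.range F.depth = ∅ := Set.range_eq_empty _
      rw [RootedForest.height, this, csSup_empty]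
      exact Nat.zero_le _
    · refine csSup_le (Set.range_nonempty _) ?_
      rintro n ⟨a, rfl⟩
      exact hdepth a
  exact le_trans (treedepth_le_of_decomp H F hdecomp) hheight

end Aux4

/-- If `td(G[S]) ≤ η` and `S` is `ℓ`-nearly clique separated in `G`, then every
minimum-size treedepth-`η` modulator `Z` of `G` satisfies `|Z ∩ S| ≤ η + ℓ`. -/
theorem min_modulator_inter_nearlyCliqueSeparated {V : Type*} [Fintype V]
    (η ℓ : ℕ) (G : SimpleGraph V) (S : Set V)
    (htd : (G.induce S).treedepth ≤ η)
    (hsep : ∃ Q ⊆ G.nbhdSet S, Q.ncard ≤ ℓ ∧ G.IsClique (G.nbhdSet S \ Q))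
    (Z : Set V) (hZ : G.IsTdMod η Z)
    (hmin : ∀ Z' : Set V, G.IsTdMod η Z' → Z.ncard ≤ Z'.ncard) :
    (Z ∩ S).ncard ≤ η + ℓ := by
  classical
  obtain ⟨Q, hQsub, hQcard, hclq⟩ := hsep
  set C : Set V := G.nbhdSet S \ Q with hCdef
  set Z' : Set V := (Z \ S) ∪ Q ∪ (C \ Z) with hZ'def
  -- the part of the clique outside Z has size at most η
  have hCZ : (C \ Z).ncard ≤ η := by
    set K : Set ↥(Zᶜ) := {v : ↥(Zᶜ) | ↑v ∈ C} with hK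
    have hKcl : (G.induce Zᶜ).IsClique K := by
      intro u hu v hv huv
      exact hclq hu hv (fun h => huv (Subtype.ext h))
    have h1 : K.ncard ≤ (G.induce Zᶜ).treedepth :=
      ncard_le_treedepth_of_isClique _ _ hKcl
    have h2 : C \ Z = Subtype.val '' K := by
      ext x
      constructor
      · intro hx; exact ⟨⟨x, hx.2⟩, hx.1, rfl⟩
      · rintro ⟨⟨x, hxz⟩, hxC, rfl⟩; exact ⟨hxC, hxz⟩
    rw [h2, Set.ncard_image_of_injective _ Subtype.val_injective]
    exact le_trans h1 hZ
  -- Z' is a modulator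
  have hmod : G.IsTdMod η Z' := by
    set P : Set ↥(Z'ᶜ) := {v : ↥(Z'ᶜ) | ↑v ∈ S} with hPdef
    have hnb : ∀ u v : ↥(Z'ᶜ), u ∈ P → v ∉ P → ¬ (G.induce Z'ᶜ).Adj u v := by
      intro u v hu hv hadj
      have hadj' : G.Adj (↑u) (↑v) := hadj
      have hvn : (v : V) ∈ G.nbhdSet S := ⟨hv, ↑u, hu, hadj'.symm⟩
      have hvZ' : (v : V) ∉ Z' := v.2
      by_cases hq : (v : V) ∈ Q
      · exact hvZ' (Or.inl (Or.inr hq))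
      · have hvC : (v : V) ∈ C := ⟨hvn, hq⟩
        by_cases hz : (v : V) ∈ Z
        · exact hvZ' (Or.inl (Or.inl ⟨hz, hvn.1⟩))
        · exact hvZ' (Or.inr ⟨hvC, hz⟩)
    have hA : ((G.induce Z'ᶜ).induce P).treedepth ≤ η := by
      refine le_trans (treedepth_le_of_embed _ (G.induce S)
        (fun v => ⟨↑↑v, v.2⟩) ?_ ?_) htd
      · intro a b hab
        injection hab with h1
        exact Subtype.ext (Subtype.ext h1)
      · intro u v h
        exact h
    have hB : ((G.induce Z'ᶜ).induce Pᶜ).treedepth ≤ η := by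
      have hmem : ∀ v : ↥Pᶜ, (↑↑v : V) ∈ Zᶜ := by
        intro v
        intro hz
        have h1 : (↑↑v : V) ∉ S := v.2
        have h2 : (↑↑v : V) ∉ Z' := (↑v : ↥(Z'ᶜ)).2
        exact h2 (Or.inl (Or.inl ⟨hz, h1⟩))
      refine le_trans (treedepth_le_of_embed _ (G.induce Zᶜ)
        (fun v => ⟨↑↑v, hmem v⟩) ?_ ?_) hZ
      · intro a b hab
        injection hab with h1
        exact Subtype.ext (Subtype.ext h1)
      · intro u v h
        exact h
    exact le_trans (treedepth_le_max_of_separation (G.induce Z'ᶜ) P hnb) (max_le hA hB)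
  have h3 : Z.ncard ≤ Z'.ncard := hmin Z' hmod
  have h4 : Z'.ncard ≤ (Z \ S).ncard + ℓ + η := by
    calc Z'.ncard ≤ ((Z \ S) ∪ Q).ncard + (C \ Z).ncard := Set.ncard_union_le _ _
      _ ≤ (Z \ S).ncard + Q.ncard + (C \ Z).ncard :=
          Nat.add_le_add_right (Set.ncard_union_le _ _) _
      _ ≤ (Z \ S).ncard + ℓ + η := by omega
  have h5 : (Z ∩ S).ncard + (Z \ S).ncard = Z.ncard :=
    Set.ncard_inter_add_ncard_diff_eq_ncard Z S
  omega
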